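/- Let n ≥ 2 and 1 ≤ m ≤ n/2, and let ν be the partition of n consisting of m parts equal to 2 followed by n − 2m parts equal to 1, so ν has M = n − m parts; set n_k := ν₁ + … + ν_k. Then min_{1 ≤ k ≤ M} ( (Σ_{j=1}^{k} j·ν_j) − 1 ) / ( C(n_k, 2) − Σ_{j=1}^{k} (j−1)ν_j ) = 1. -/

import Mathlib

open Finset

lemma sumIccR (k : ℕ) : ∑ j ∈ Finset.Icc 1 k, (j : ℝ) = k * (k + 1) / 2 := by
  induction k with
  | zero => simp
  | succ k ih =>
    rw [Finset.sum_Icc_succ_top (by omega : 1 ≤ k + 1), ih]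
    push_cast; ring

lemma sumIoc (a b : ℕ) (h : a ≤ b) :
    ∑ j ∈ Finset.Ioc a b, (j : ℝ) = b * (b + 1) / 2 - a * (a + 1) / 2 := by
  have := Finset.sum_Ioc_consecutive (fun j => (j : ℝ)) (Nat.zero_le a) h
  have h0a : ∑ j ∈ Finset.Ioc 0 a, (j : ℝ) = a * (a+1)/2 := by
    rw [← Finset.Icc_add_one_left_eq_Ioc]; exact sumIccR a
  have h0b : ∑ j ∈ Finset.Ioc 0 b, (j : ℝ) = b * (b+1)/2 := by
    rw [← Finset.Icc_add_one_left_eq_Ioc]; exact sumIccR b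
  rw [h0a, h0b] at this
  linarith

/-- For `n ≥ 2` and `1 ≤ m ≤ n/2`, let `ν = (2^m, 1^{n−2m})` be the
(`1`-indexed) partition of `n` with `m` parts equal to `2` followed by `n − 2m` parts equal
to `1`, so `ν` has `M = n − m` parts; set `n_k := ν₁ + … + ν_k`.  Then
`min_{1 ≤ k ≤ M} ((∑_{j=1}^k j·ν_j) − 1) / (C(n_k,2) − ∑_{j=1}^k (j−1)·ν_j) = 1`. -/
theorem stmt14 (n m : ℕ) (hn : 2 ≤ n) (hm : 1 ≤ m) (hmn : 2 * m ≤ n) :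
    sInf {t : ℝ | ∃ k, 1 ≤ k ∧ k ≤ n - m ∧
      t = ((∑ j ∈ Finset.Icc 1 k, (j : ℝ) * (((if j ≤ m then 2 else 1) : ℕ) : ℝ)) - 1) /
        ((Nat.choose (∑ j ∈ Finset.Icc 1 k, (if j ≤ m then 2 else 1)) 2 : ℝ)
          - ∑ j ∈ Finset.Icc 1 k, ((j : ℝ) - 1) * (((if j ≤ m then 2 else 1) : ℕ) : ℝ))} = 1 := by
  set S := {t : ℝ | ∃ k, 1 ≤ k ∧ k ≤ n - m ∧
      t = ((∑ j ∈ Finset.Icc 1 k, (j : ℝ) * (((if j ≤ m then 2 else 1) : ℕ) : ℝ)) - 1) /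
        ((Nat.choose (∑ j ∈ Finset.Icc 1 k, (if j ≤ m then 2 else 1)) 2 : ℝ)
          - ∑ j ∈ Finset.Icc 1 k, ((j : ℝ) - 1) * (((if j ≤ m then 2 else 1) : ℕ) : ℝ))} with hS
  have hmem : (1 : ℝ) ∈ S := by
    refine ⟨1, le_refl 1, by omega, ?_⟩
    simp [Finset.Icc_self, hm]
    norm_num
  have hlb : ∀ t ∈ S, (1 : ℝ) ≤ t := by
    rintro t ⟨k, hk1, hk2, rfl⟩
    by_cases hkm : k ≤ m
    · -- all parts equal 2
      have hA : (∑ j ∈ Finset.Icc 1 k, (j : ℝ) * (((if j ≤ m then 2 else 1) : ℕ) : ℝ))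
          = k * (k + 1) := by
        rw [Finset.sum_congr rfl (fun j hj => by
          rw [if_pos (le_trans (Finset.mem_Icc.mp hj).2 hkm)])]
        push_cast
        rw [← Finset.sum_mul, sumIccR]; ring
      have hB : (∑ j ∈ Finset.Icc 1 k, (if j ≤ m then 2 else 1)) = 2 * k := by
        rw [Finset.sum_congr rfl (fun j hj => by
          rw [if_pos (le_trans (Finset.mem_Icc.mp hj).2 hkm)])]
        simp [Nat.card_Icc, mul_comm]
      have hC : (∑ j ∈ Finset.Icc 1 k, ((j : ℝ) - 1) * (((if j ≤ m then 2 else 1) : ℕ) : ℝ))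
          = k * (k + 1) - 2 * k := by
        have hcg : ∀ j ∈ Finset.Icc 1 k, ((j : ℝ) - 1) * (((if j ≤ m then 2 else 1) : ℕ) : ℝ)
            = (j : ℝ) * 2 - 2 := by
          intro j hj
          rw [if_pos (le_trans (Finset.mem_Icc.mp hj).2 hkm)]
          push_cast; ring
        rw [Finset.sum_congr rfl hcg, Finset.sum_sub_distrib, ← Finset.sum_mul, sumIccR]
        simp [Nat.card_Icc]
        ring
      rw [hA, hB, hC, Nat.cast_choose_two]
      have hk1' : (1 : ℝ) ≤ (k : ℝ) := by exact_mod_cast hk1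
      have hden : ((2 * k : ℕ) : ℝ) * (((2 * k : ℕ) : ℝ) - 1) / 2
          - (k * (k + 1) - 2 * k) = (k : ℝ) ^ 2 := by push_cast; ring
      rw [hden]
      rw [le_div_iff₀ (by positivity)]
      nlinarith
    · -- k > m
      push_neg at hkm
      have hmk : m ≤ k := le_of_lt hkm
      have hsplit : (Finset.Icc 1 k) = Finset.Ioc 0 m ∪ Finset.Ioc m k := by
        rw [Finset.Ioc_union_Ioc_eq_Ioc (Nat.zero_le m) hmk, ← Finset.Icc_add_one_left_eq_Ioc]; rfl
      have hdisj : Disjoint (Finset.Ioc 0 m) (Finset.Ioc m k) := by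
        rw [Finset.disjoint_left]
        intro a ha hb
        simp only [Finset.mem_Ioc] at ha hb
        omega
      have hif1 : ∀ j ∈ Finset.Ioc 0 m, (if j ≤ m then 2 else 1) = 2 := fun j hj =>
        if_pos (Finset.mem_Ioc.mp hj).2
      have hif2 : ∀ j ∈ Finset.Ioc m k, (if j ≤ m then 2 else 1) = 1 := fun j hj =>
        if_neg (by have := (Finset.mem_Ioc.mp hj).1; omega)
      have hIm : ∑ j ∈ Finset.Ioc 0 m, (j : ℝ) = m * (m + 1) / 2 := by
        have := sumIoc 0 m (Nat.zero_le m)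
        simpa using this
      have hImk : ∑ j ∈ Finset.Ioc m k, (j : ℝ) = k * (k + 1) / 2 - m * (m + 1) / 2 :=
        sumIoc m k hmk
      have hA : (∑ j ∈ Finset.Icc 1 k, (j : ℝ) * (((if j ≤ m then 2 else 1) : ℕ) : ℝ))
          = k * (k + 1) / 2 + m * (m + 1) / 2 := by
        rw [hsplit, Finset.sum_union hdisj]
        have e1 : ∀ j ∈ Finset.Ioc 0 m,
            (j : ℝ) * (((if j ≤ m then 2 else 1) : ℕ) : ℝ) = (j : ℝ) * 2 := fun j hj => by
          rw [hif1 j hj]; norm_num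
        have e2 : ∀ j ∈ Finset.Ioc m k,
            (j : ℝ) * (((if j ≤ m then 2 else 1) : ℕ) : ℝ) = (j : ℝ) := fun j hj => by
          rw [hif2 j hj]; norm_num
        rw [Finset.sum_congr rfl e1, Finset.sum_congr rfl e2, ← Finset.sum_mul, hIm, hImk]
        ring
      have hB : (∑ j ∈ Finset.Icc 1 k, (if j ≤ m then 2 else 1)) = m + k := by
        rw [hsplit, Finset.sum_union hdisj, Finset.sum_congr rfl hif1,
          Finset.sum_congr rfl hif2]
        simp [Nat.card_Ioc]
        omega
      have hC : (∑ j ∈ Finset.Icc 1 k, ((j : ℝ) - 1) * (((if j ≤ m then 2 else 1) : ℕ) : ℝ))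
          = (k * (k + 1) / 2 + m * (m + 1) / 2) - (m + k) := by
        rw [hsplit, Finset.sum_union hdisj]
        have e1 : ∀ j ∈ Finset.Ioc 0 m,
            ((j : ℝ) - 1) * (((if j ≤ m then 2 else 1) : ℕ) : ℝ) = (j : ℝ) * 2 - 2 :=
          fun j hj => by rw [hif1 j hj]; push_cast; ring
        have e2 : ∀ j ∈ Finset.Ioc m k,
            ((j : ℝ) - 1) * (((if j ≤ m then 2 else 1) : ℕ) : ℝ) = (j : ℝ) - 1 :=
          fun j hj => by rw [hif2 j hj]; push_cast; ring
        rw [Finset.sum_congr rfl e1, Finset.sum_congr rfl e2, Finset.sum_sub_distrib,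
          Finset.sum_sub_distrib, ← Finset.sum_mul, hIm, hImk]
        simp only [Finset.sum_const, Nat.card_Ioc, nsmul_eq_mul, Nat.cast_sub hmk, Nat.sub_zero]
        ring
      rw [hA, hB, hC, Nat.cast_choose_two]
      have hk1' : (1 : ℝ) ≤ (k : ℝ) := by exact_mod_cast hk1
      have hm1' : (1 : ℝ) ≤ (m : ℝ) := by exact_mod_cast hm
      have hden : ((m + k : ℕ) : ℝ) * (((m + k : ℕ) : ℝ) - 1) / 2
          - (k * (k + 1) / 2 + m * (m + 1) / 2 - (m + k)) = (m : ℝ) * k := by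
        push_cast; ring
      rw [hden, le_div_iff₀ (by nlinarith)]
      nlinarith [sq_nonneg ((k : ℝ) - m)]
  have hbdd : BddBelow S := ⟨1, hlb⟩
  exact le_antisymm (csInf_le hbdd hmem) (le_csInf ⟨1, hmem⟩ hlb)
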